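/- Let R be a ring and F an injective left R-module that is also a cogenerator. Let A ∈ R^{l'×l}, let B ∈ R^{l×l''} be a right nullspace of A, and let A' ∈ R^{l'''×l} be a left nullspace of B. Then Sol_F(A') ⊆ Sol_F(A), and Sol_F(A') is the largest parametrizable subset of Sol_F(A): for every m and every matrix B̃ ∈ R^{l×m} whose image B̃ F^{m×1} is contained in Sol_F(A), one has B̃ F^{m×1} ⊆ Sol_F(A'). -/
import Mathlib


/-- Action of a matrix over `R` on column vectors with entries in a left `R`-module `F`. -/
def matVec {R : Type} [Ring R] {F : Type} [AddCommGroup F] [Module R F]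
    {p q : ℕ} (A : Matrix (Fin p) (Fin q) R) (f : Fin q → F) : Fin p → F :=
  fun i => ∑ j, A i j • f j

/-- The solution set `Sol_F(A) = {f ∈ F^{l×1} | A f = 0}`. -/
def solSet {R : Type} [Ring R] {F : Type} [AddCommGroup F] [Module R F]
    {p q : ℕ} (A : Matrix (Fin p) (Fin q) R) : Set (Fin q → F) :=
  {f | matVec A f = 0}

/-- The image `B F^{m×1}` of a matrix `B` over `R`. -/
def matImage {R : Type} [Ring R] {F : Type} [AddCommGroup F] [Module R F]
    {q m : ℕ} (B : Matrix (Fin q) (Fin m) R) : Set (Fin q → F) :=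
  {f | ∃ g : Fin m → F, f = matVec B g}

lemma matVec_matVec {R : Type} [Ring R] {F : Type} [AddCommGroup F] [Module R F]
    {p q r : ℕ} (A : Matrix (Fin p) (Fin q) R) (B : Matrix (Fin q) (Fin r) R)
    (g : Fin r → F) : matVec A (matVec B g) = matVec (A * B) g := by
  funext i
  simp only [matVec, Matrix.mul_apply, Finset.smul_sum, Finset.sum_smul, smul_smul]
  exact Finset.sum_comm

/-- Faithfulness of `Hom(-, F)` on free modules, from cogenerator + injectivity. -/
lemma exists_hom_ne_zero {R : Type} [Ring R] {F : Type} [AddCommGroup F] [Module R F]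
    (hF : Module.Injective R F)
    (hcogen : ∀ (M : Type) [AddCommGroup M] [Module R M],
      (∃ m : M, m ≠ 0) → ∃ φ : M →ₗ[R] F, φ ≠ 0)
    {m : ℕ} (w : Fin m → R) (hw : w ≠ 0) :
    ∃ φ : (Fin m → R) →ₗ[R] F, φ w ≠ 0 := by
  set N : Submodule R (Fin m → R) := Submodule.span R {w}
  have hwN : w ∈ N := Submodule.mem_span_singleton_self w
  obtain ⟨φ₀, hφ₀⟩ := hcogen ↥N ⟨⟨w, hwN⟩, by simpa [Submodule.mk_eq_zero] using hw⟩
  have hφ₀w : φ₀ ⟨w, hwN⟩ ≠ 0 := by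
    intro h
    apply hφ₀
    ext ⟨x, hx⟩
    obtain ⟨r, rfl⟩ := Submodule.mem_span_singleton.mp hx
    have : (⟨r • w, hx⟩ : N) = r • ⟨w, hwN⟩ := rfl
    rw [this, map_smul, h, smul_zero]
    rfl
  obtain ⟨φ, hφ⟩ := hF.out N.subtype (Submodule.injective_subtype N) φ₀
  exact ⟨φ, by simpa using (hφ ⟨w, hwN⟩) ▸ hφ₀w⟩

theorem sol_of_left_nullspace_is_largest_parametrizable_subset
    {R : Type} [Ring R] {F : Type} [AddCommGroup F] [Module R F]
    (hF : Module.Injective R F)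
    -- F is a cogenerator
    (hcogen : ∀ (M : Type) [AddCommGroup M] [Module R M],
      (∃ m : M, m ≠ 0) → ∃ φ : M →ₗ[R] F, φ ≠ 0)
    {l' l l'' l''' : ℕ}
    (A : Matrix (Fin l') (Fin l) R)
    (B : Matrix (Fin l) (Fin l'') R)
    (A' : Matrix (Fin l''') (Fin l) R)
    -- B is a right nullspace of A
    (hAB : A * B = 0)
    (hBker : ∀ v : Fin l → R, A.mulVec v = 0 → ∃ c : Fin l'' → R, v = B.mulVec c)
    -- A' is a left nullspace of B
    (hA'B : A' * B = 0)
    (hA'ker : ∀ w : Fin l → R, Matrix.vecMul w B = 0 →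
      ∃ u : Fin l''' → R, w = Matrix.vecMul u A') :
    solSet (F := F) A' ⊆ solSet (F := F) A ∧
      ∀ (m : ℕ) (Bt : Matrix (Fin l) (Fin m) R),
        matImage (F := F) Bt ⊆ solSet (F := F) A →
          matImage (F := F) Bt ⊆ solSet (F := F) A' := by
  constructor
  · -- Sol(A') ⊆ Sol(A): every row of A is a left combination of rows of A'
    intro f hf
    funext i
    have hrow : Matrix.vecMul (A i) B = 0 := by
      funext k
      have := congrFun (congrFun hAB i) k
      simpa [Matrix.mul_apply, Matrix.vecMul, dotProduct] using this
    obtain ⟨u, hu⟩ := hA'ker (A i) hrow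
    have hf' : ∀ k, ∑ j, A' k j • f j = 0 := fun k => congrFun hf k
    calc matVec A f i = ∑ j, (∑ k, u k * A' k j) • f j := by
          simp only [matVec]
          congr 1
          funext j
          rw [congrFun hu j]
          simp [Matrix.vecMul, dotProduct]
      _ = ∑ k, u k • ∑ j, A' k j • f j := by
          simp only [Finset.sum_smul, Finset.smul_sum, smul_smul]
          exact Finset.sum_comm
      _ = 0 := by simp [hf']
  · -- largest parametrizable subset
    intro m Bt hBt
    -- Step 1: A * Bt = 0
    have hABt : A * Bt = 0 := by
      by_contra h
      have : ∃ i, (A * Bt) i ≠ 0 := by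
        by_contra h'
        push_neg at h'
        exact h (funext h')
      obtain ⟨i, hi⟩ := this
      obtain ⟨φ, hφ⟩ := exists_hom_ne_zero hF hcogen ((A * Bt) i) hi
      set g : Fin m → F := fun j => φ (Pi.single j 1)
      have hsol : matVec Bt g ∈ solSet (F := F) A := hBt ⟨g, rfl⟩
      have h0 : matVec (A * Bt) g = 0 := by rw [← matVec_matVec]; exact hsol
      apply hφ
      have : ((A * Bt) i) = ∑ j, (A * Bt) i j • (Pi.single j 1 : Fin m → R) := by
        funext j'
        simp [Pi.single_apply, Finset.sum_apply]
      rw [this, map_sum]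
      have := congrFun h0 i
      simpa [matVec, g] using this
    -- Step 2: each column of Bt is in the image of B, hence Bt = B * C
    have hcols : ∀ j, ∃ c : Fin l'' → R, (fun i => Bt i j) = B.mulVec c := by
      intro j
      apply hBker
      funext i
      have := congrFun (congrFun hABt i) j
      simpa [Matrix.mul_apply, Matrix.mulVec, dotProduct] using this
    choose c hc using hcols
    have hBtBC : Bt = B * (Matrix.of fun k j => c j k) := by
      funext i j
      have := congrFun (hc j) i
      simpa [Matrix.mul_apply, Matrix.mulVec, dotProduct] using this
    have hA'Bt : A' * Bt = 0 := by
      rw [hBtBC, ← Matrix.mul_assoc, hA'B, Matrix.zero_mul]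
    intro f hf
    obtain ⟨g, rfl⟩ := hf
    show matVec A' (matVec Bt g) = 0
    rw [matVec_matVec, hA'Bt]
    funext i
    simp [matVec]
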